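/- Let A₁, A₂, A₃ be three non-collinear points in the real affine plane, and let P₁₂, P₂₃, P₃₁ be points on the lines (A₁,A₂), (A₂,A₃), (A₃,A₁) respectively, each distinct from the vertices. Write each P as an affine combination: P₁₂ = (1−t₁)A₁ + t₁A₂, P₂₃ = (1−t₂)A₂ + t₂A₃, P₃₁ = (1−t₃)A₃ + t₃A₁ with tᵢ ∉ {0,1}. Then the three lines (A₁,P₂₃), (A₂,P₃₁), (A₃,P₁₂) are concurrent or all parallel if and only if (t₁/(1−t₁))·(t₂/(1−t₂))·(t₃/(1−t₃)) = 1. -/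

import Mathlib

/-- In `ℝ × ℝ`, if `w ≠ 0` and the cross product of `w` and `z` vanishes,
then `z` is a multiple of `w`. -/
lemma smul_of_cross_eq (w z : ℝ × ℝ) (hw : w ≠ 0) (h : w.1 * z.2 = w.2 * z.1) :
    ∃ r : ℝ, z = r • w := by
  rcases eq_or_ne w.1 0 with h1 | h1
  · have h2 : w.2 ≠ 0 := by
      intro h2; exact hw (Prod.ext h1 h2)
    refine ⟨z.2 / w.2, ?_⟩
    have hz1 : z.1 = 0 := by
      have := h; rw [h1] at this
      field_simp at this
      simpa [h2] using this.symm
    apply Prod.ext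
    · simp [hz1, h1]
    · simp only [Prod.smul_snd, smul_eq_mul]; rw [div_mul_cancel₀ _ h2]
  · refine ⟨z.1 / w.1, ?_⟩
    apply Prod.ext
    · simp only [Prod.smul_fst, smul_eq_mul]; rw [div_mul_cancel₀ _ h1]
    · simp only [Prod.smul_snd, smul_eq_mul]
      field_simp
      linarith [h]

lemma memLine (a b : ℝ × ℝ) (h : b ≠ a) (p : ℝ × ℝ) :
    p ∈ affineSpan ℝ ({a, b} : Set (ℝ × ℝ)) ↔
      (p.1 - a.1) * (b.2 - a.2) = (p.2 - a.2) * (b.1 - a.1) := by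
  have hm : p ∈ affineSpan ℝ ({a, b} : Set (ℝ × ℝ)) ↔ ∃ r : ℝ, r • (b -ᵥ a) = p -ᵥ a := by
    conv_lhs => rw [show p = (p -ᵥ a) +ᵥ a from (vsub_vadd p a).symm]
    exact vadd_left_mem_affineSpan_pair
  rw [hm]
  constructor
  · rintro ⟨r, hr⟩
    rw [Prod.ext_iff] at hr
    simp only [vsub_eq_sub, Prod.smul_fst, Prod.smul_snd, Prod.fst_sub, Prod.snd_sub,
      smul_eq_mul] at hr
    obtain ⟨h1, h2⟩ := hr
    linear_combination (b.1 - a.1) * h2 - (b.2 - a.2) * h1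
  · intro hc
    have hw : b -ᵥ a ≠ 0 := sub_ne_zero.mpr h
    obtain ⟨r, hr⟩ := smul_of_cross_eq (b -ᵥ a) (p -ᵥ a) hw (by
      simp only [vsub_eq_sub, Prod.fst_sub, Prod.snd_sub]
      linarith [hc])
    exact ⟨r, hr.symm⟩

lemma parLine (a b c d : ℝ × ℝ) (hab : b ≠ a) (hcd : d ≠ c) :
    AffineSubspace.Parallel (affineSpan ℝ ({a, b} : Set (ℝ × ℝ)))
        (affineSpan ℝ ({c, d} : Set (ℝ × ℝ))) ↔
      (b.1 - a.1) * (d.2 - c.2) = (b.2 - a.2) * (d.1 - c.1) := by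
  rw [AffineSubspace.affineSpan_pair_parallel_iff_vectorSpan_eq, vectorSpan_pair,
    vectorSpan_pair]
  constructor
  · intro hs
    have : (c -ᵥ d) ∈ (ℝ ∙ (a -ᵥ b)) := by rw [hs]; exact Submodule.mem_span_singleton_self _
    rw [Submodule.mem_span_singleton] at this
    obtain ⟨r, hr⟩ := this
    rw [Prod.ext_iff] at hr
    simp only [vsub_eq_sub, Prod.smul_fst, Prod.smul_snd, Prod.fst_sub, Prod.snd_sub,
      smul_eq_mul] at hr
    obtain ⟨h1, h2⟩ := hr
    linear_combination (a.2 - b.2) * h1 - (a.1 - b.1) * h2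
  · intro hc
    have hab' : a -ᵥ b ≠ 0 := sub_ne_zero.mpr (Ne.symm hab)
    have hcd' : c -ᵥ d ≠ 0 := sub_ne_zero.mpr (Ne.symm hcd)
    apply le_antisymm
    · rw [Submodule.span_singleton_le_iff_mem, Submodule.mem_span_singleton]
      obtain ⟨r, hr⟩ := smul_of_cross_eq (c -ᵥ d) (a -ᵥ b) hcd' (by
        simp only [vsub_eq_sub, Prod.fst_sub, Prod.snd_sub]; linarith [hc])
      exact ⟨r, hr.symm⟩
    · rw [Submodule.span_singleton_le_iff_mem, Submodule.mem_span_singleton]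
      obtain ⟨r, hr⟩ := smul_of_cross_eq (a -ᵥ b) (c -ᵥ d) hab' (by
        simp only [vsub_eq_sub, Prod.fst_sub, Prod.snd_sub]; linarith [hc])
      exact ⟨r, hr.symm⟩

lemma cross_ne_of_not_collinear (a b c : ℝ × ℝ)
    (h : ¬ Collinear ℝ ({a, b, c} : Set (ℝ × ℝ))) :
    (b.1 - a.1) * (c.2 - a.2) - (b.2 - a.2) * (c.1 - a.1) ≠ 0 := by
  intro hq
  apply h
  rw [collinear_iff_of_mem (show a ∈ ({a, b, c} : Set (ℝ × ℝ)) from Set.mem_insert _ _)]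
  rcases eq_or_ne b a with hb | hb
  · refine ⟨c -ᵥ a, ?_⟩
    rintro p (rfl | rfl | rfl)
    · exact ⟨0, by simp⟩
    · exact ⟨0, by simp [hb]⟩
    · exact ⟨1, by simp⟩
  · refine ⟨b -ᵥ a, ?_⟩
    rintro p (rfl | rfl | rfl)
    · exact ⟨0, by simp⟩
    · exact ⟨1, by simp⟩
    · obtain ⟨r, hr⟩ := smul_of_cross_eq (b -ᵥ a) (p -ᵥ a) (sub_ne_zero.mpr hb) (by
        simp only [vsub_eq_sub, Prod.fst_sub, Prod.snd_sub]; linarith [hq])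
      exact ⟨r, by rw [← hr]; simp⟩

/-- Ceva's theorem: the cevians `(A₁,P₂₃)`, `(A₂,P₃₁)`, `(A₃,P₁₂)` are
concurrent or all parallel iff the product of the signed edge ratios equals 1. -/
theorem stmt3 (A₁ A₂ A₃ : ℝ × ℝ)
    (hnc : ¬ Collinear ℝ ({A₁, A₂, A₃} : Set (ℝ × ℝ)))
    (t₁ t₂ t₃ : ℝ)
    (ht₁ : t₁ ≠ 0) (ht₁' : t₁ ≠ 1) (ht₂ : t₂ ≠ 0) (ht₂' : t₂ ≠ 1)
    (ht₃ : t₃ ≠ 0) (ht₃' : t₃ ≠ 1)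
    (P₁₂ P₂₃ P₃₁ : ℝ × ℝ)
    (hP₁₂ : P₁₂ = (1 - t₁) • A₁ + t₁ • A₂)
    (hP₂₃ : P₂₃ = (1 - t₂) • A₂ + t₂ • A₃)
    (hP₃₁ : P₃₁ = (1 - t₃) • A₃ + t₃ • A₁) :
    ((∃ P : ℝ × ℝ,
        P ∈ affineSpan ℝ ({A₁, P₂₃} : Set (ℝ × ℝ)) ∧
        P ∈ affineSpan ℝ ({A₂, P₃₁} : Set (ℝ × ℝ)) ∧
        P ∈ affineSpan ℝ ({A₃, P₁₂} : Set (ℝ × ℝ))) ∨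
      (AffineSubspace.Parallel (affineSpan ℝ ({A₁, P₂₃} : Set (ℝ × ℝ)))
          (affineSpan ℝ ({A₂, P₃₁} : Set (ℝ × ℝ))) ∧
       AffineSubspace.Parallel (affineSpan ℝ ({A₂, P₃₁} : Set (ℝ × ℝ)))
          (affineSpan ℝ ({A₃, P₁₂} : Set (ℝ × ℝ))) ∧
       AffineSubspace.Parallel (affineSpan ℝ ({A₁, P₂₃} : Set (ℝ × ℝ)))
          (affineSpan ℝ ({A₃, P₁₂} : Set (ℝ × ℝ))))) ↔
      (t₁ / (1 - t₁)) * (t₂ / (1 - t₂)) * (t₃ / (1 - t₃)) = 1 := by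
  subst hP₁₂ hP₂₃ hP₃₁
  obtain ⟨a1, a2⟩ := A₁
  obtain ⟨b1, b2⟩ := A₂
  obtain ⟨c1, c2⟩ := A₃
  have hD : (b1 - a1) * (c2 - a2) - (b2 - a2) * (c1 - a1) ≠ 0 :=
    cross_ne_of_not_collinear _ _ _ hnc
  have h1t₁ : (1 : ℝ) - t₁ ≠ 0 := sub_ne_zero.mpr (Ne.symm ht₁')
  have h1t₂ : (1 : ℝ) - t₂ ≠ 0 := sub_ne_zero.mpr (Ne.symm ht₂')
  have h1t₃ : (1 : ℝ) - t₃ ≠ 0 := sub_ne_zero.mpr (Ne.symm ht₃')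
  have hne₁ : (((1 - t₂) * b1 + t₂ * c1, (1 - t₂) * b2 + t₂ * c2) : ℝ × ℝ) ≠ (a1, a2) := by
    intro he
    simp only [Prod.mk.injEq] at he
    obtain ⟨he1, he2⟩ := he
    subst he1 he2
    exact hD (by ring)
  have hne₂ : (((1 - t₃) * c1 + t₃ * a1, (1 - t₃) * c2 + t₃ * a2) : ℝ × ℝ) ≠ (b1, b2) := by
    intro he
    simp only [Prod.mk.injEq] at he
    obtain ⟨he1, he2⟩ := he
    subst he1 he2
    exact hD (by ring)
  have hne₃ : (((1 - t₁) * a1 + t₁ * b1, (1 - t₁) * a2 + t₁ * b2) : ℝ × ℝ) ≠ (c1, c2) := by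
    intro he
    simp only [Prod.mk.injEq] at he
    obtain ⟨he1, he2⟩ := he
    subst he1 he2
    exact hD (by ring)
  simp only [memLine _ _ hne₁, memLine _ _ hne₂, memLine _ _ hne₃,
    parLine _ _ _ _ hne₁ hne₂, parLine _ _ _ _ hne₂ hne₃, parLine _ _ _ _ hne₁ hne₃,
    Prod.smul_mk, Prod.mk_add_mk, smul_eq_mul]
  constructor
  · rintro (⟨⟨p1, p2⟩, c₁, c₂, c₃⟩ | ⟨q₁, q₂, q₃⟩)
    · dsimp only at c₁ c₂ c₃
      obtain ⟨x, y, hx1, hx2⟩ : ∃ x y : ℝ,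
          p1 = a1 + x * (b1 - a1) + y * (c1 - a1) ∧
          p2 = a2 + x * (b2 - a2) + y * (c2 - a2) := by
        refine ⟨((p1 - a1) * (c2 - a2) - (p2 - a2) * (c1 - a1)) /
            ((b1 - a1) * (c2 - a2) - (b2 - a2) * (c1 - a1)),
          ((b1 - a1) * (p2 - a2) - (b2 - a2) * (p1 - a1)) /
            ((b1 - a1) * (c2 - a2) - (b2 - a2) * (c1 - a1)), ?_, ?_⟩
        · rw [div_mul_eq_mul_div, div_mul_eq_mul_div, add_assoc, ← add_div,
            add_div' _ _ _ hD, eq_div_iff hD]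
          ring
        · rw [div_mul_eq_mul_div, div_mul_eq_mul_div, add_assoc, ← add_div,
            add_div' _ _ _ hD, eq_div_iff hD]
          ring
      subst hx1 hx2
      have hcan : ∀ z : ℝ, z * ((b1 - a1) * (c2 - a2) - (b2 - a2) * (c1 - a1)) = 0 → z = 0 := by
        intro z h
        rcases mul_eq_zero.mp h with h | h
        · exact h
        · exact absurd h hD
      have e₁s : x * t₂ - y * (1 - t₂) = 0 := hcan _ (by linear_combination c₁)
      have e₂s : (x - 1) * (1 - t₃) + y = 0 := hcan _ (by linear_combination c₂)
      have e₃s : x + t₁ * (y - 1) = 0 := hcan _ (by linear_combination -c₃)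
      have eqA : x * (1 - t₁ + t₁ * t₃) = t₁ * t₃ := by linear_combination e₃s - t₁ * e₂s
      have eqB : y * (1 - t₁ + t₁ * t₃) = (1 - t₁) * (1 - t₃) := by
        linear_combination e₂s - (1 - t₃) * e₃s
      field_simp
      linear_combination (1 - t₁ + t₁ * t₃) * e₁s - t₂ * eqA + (1 - t₂) * eqB
    · have hcan : ∀ z : ℝ, z * ((b1 - a1) * (c2 - a2) - (b2 - a2) * (c1 - a1)) = 0 → z = 0 := by
        intro z h
        rcases mul_eq_zero.mp h with h | h
        · exact h
        · exact absurd h hD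
      have hs₁ : (1 - t₂) * (1 - t₃) + t₂ = 0 := hcan _ (by linear_combination q₁)
      have hΔ0 : 1 - t₁ + t₁ * t₃ = 0 := hcan _ (by linear_combination q₂)
      field_simp
      linear_combination -(1 - t₁) * hs₁ + t₂ * hΔ0
  · intro hpr
    have hE : t₁ * t₂ * t₃ - (1 - t₁) * (1 - t₂) * (1 - t₃) = 0 := by
      field_simp at hpr
      linear_combination hpr
    by_cases hΔ : (1 : ℝ) - t₁ + t₁ * t₃ = 0
    · right
      have hs₁ : (1 - t₂) * (1 - t₃) + t₂ = 0 := by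
        have h : (1 - t₁) * ((1 - t₂) * (1 - t₃) + t₂) = 0 := by
          linear_combination t₂ * hΔ - hE
        rcases mul_eq_zero.mp h with h' | h'
        · exact absurd h' h1t₁
        · exact h'
      have hs₃ : (1 - t₂) + t₁ * t₂ = 0 := by
        linear_combination t₁ * hs₁ + (1 - t₂) * hΔ
      refine ⟨?_, ?_, ?_⟩
      · linear_combination ((b1 - a1) * (c2 - a2) - (b2 - a2) * (c1 - a1)) * hs₁
      · linear_combination ((b1 - a1) * (c2 - a2) - (b2 - a2) * (c1 - a1)) * hΔ
      · linear_combination -((b1 - a1) * (c2 - a2) - (b2 - a2) * (c1 - a1)) * hs₃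
    · left
      refine ⟨(a1 + (t₁ * t₃ / (1 - t₁ + t₁ * t₃)) * (b1 - a1) +
            ((1 - t₁) * (1 - t₃) / (1 - t₁ + t₁ * t₃)) * (c1 - a1),
          a2 + (t₁ * t₃ / (1 - t₁ + t₁ * t₃)) * (b2 - a2) +
            ((1 - t₁) * (1 - t₃) / (1 - t₁ + t₁ * t₃)) * (c2 - a2)), ?_, ?_, ?_⟩
      · dsimp only
        field_simp
        linear_combination ((b1 - a1) * (c2 - a2) - (b2 - a2) * (c1 - a1)) * hE
      · dsimp only
        field_simp
        ring
      · dsimp only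
        field_simp
        ring
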